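/- (Cauchy determinant identity) For distinct complex numbers p_1,…,p_n and q_1,…,q_n with p_i ≠ q_j for all i,j, det((1/(p_i − q_j))_{1≤i,j≤n}) = ∏_{1≤i<j≤n} (p_i − p_j)(q_j − q_i) / ∏_{1≤i,j≤n} (p_i − q_j). -/

import Mathlib

open Matrix Finset

/-- Cauchy determinant identity: for distinct `p₁,…,pₙ` and distinct `q₁,…,qₙ`
with `pᵢ ≠ qⱼ` for all `i, j`,
`det (1/(pᵢ - qⱼ)) = ∏_{i<j} (pᵢ - pⱼ)(qⱼ - qᵢ) / ∏_{i,j} (pᵢ - qⱼ)`. -/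
theorem cauchy_determinant (n : ℕ) (p q : Fin n → ℂ)
    (hp : Function.Injective p) (hq : Function.Injective q)
    (hpq : ∀ i j, p i ≠ q j) :
    (Matrix.of fun i j => (p i - q j)⁻¹).det
      = (∏ i, ∏ j ∈ Finset.univ.filter (fun j => i < j), (p i - p j) * (q j - q i))
        / ∏ i, ∏ j, (p i - q j) := by
  rcases Nat.eq_zero_or_pos n with hn | hn
  · subst hn
    simp [Matrix.det_fin_zero]
  -- the Cauchy matrix
  set A : Matrix (Fin n) (Fin n) ℂ := Matrix.of fun i j => (p i - q j)⁻¹ with hA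
  -- the polynomials fⱼ(X) = ∏_{m ≠ j} (X - qₘ)
  set F : Fin n → Polynomial ℂ :=
    fun j => ∏ m ∈ Finset.univ.erase j, (Polynomial.X - Polynomial.C (q m)) with hF
  have hFdeg : ∀ j, (F j).natDegree < n := by
    intro j
    have : (F j).natDegree = ∑ m ∈ Finset.univ.erase j, 1 := by
      rw [hF]
      rw [Polynomial.natDegree_prod_of_monic _ _
        (fun m _ => Polynomial.monic_X_sub_C (q m))]
      simp
    rw [this]
    simp only [Finset.sum_const, smul_eq_mul, mul_one,
      Finset.card_erase_of_mem (Finset.mem_univ j), Finset.card_univ, Fintype.card_fin]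
    omega
  have hFeval : ∀ (x : ℂ) (j : Fin n),
      Polynomial.eval x (F j) = ∏ m ∈ Finset.univ.erase j, (x - q m) := by
    intro x j
    simp [hF, Polynomial.eval_prod]
  -- the coefficient matrix
  set Cm : Matrix (Fin n) (Fin n) ℂ := Matrix.of fun k j => (F j).coeff k with hCm
  have hmulC : ∀ (v : Fin n → ℂ) i j,
      (Matrix.vandermonde v * Cm) i j = ∏ m ∈ Finset.univ.erase j, (v i - q m) := by
    intro v i j
    rw [Matrix.mul_apply, ← hFeval (v i) j,
      Polynomial.eval_eq_sum_range' (hFdeg j), ← Fin.sum_univ_eq_sum_range]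
    simp [Matrix.vandermonde_apply, hCm, mul_comm]
  -- V_p * Cm is the scaled Cauchy matrix
  have h1 : Matrix.vandermonde p * Cm
      = Matrix.diagonal (fun i => ∏ m, (p i - q m)) * A := by
    ext i j
    rw [hmulC, Matrix.diagonal_mul]
    simp only [hA, Matrix.of_apply]
    rw [← Finset.prod_erase_mul Finset.univ _ (Finset.mem_univ j)]
    rw [mul_assoc, mul_inv_cancel₀ (sub_ne_zero.2 (hpq i j)), mul_one]
  -- V_q * Cm is diagonal
  have h2 : Matrix.vandermonde q * Cm
      = Matrix.diagonal (fun j => ∏ m ∈ Finset.univ.erase j, (q j - q m)) := by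
    ext i j
    rw [hmulC]
    rcases eq_or_ne i j with rfl | hij
    · simp
    · rw [Matrix.diagonal_apply_ne _ hij]
      exact Finset.prod_eq_zero (Finset.mem_erase.2 ⟨hij, Finset.mem_univ i⟩)
        (by simp)
  -- take determinants
  have hdet1 : (Matrix.vandermonde p).det * Cm.det
      = (∏ i, ∏ m, (p i - q m)) * A.det := by
    rw [← Matrix.det_mul, h1, Matrix.det_mul, Matrix.det_diagonal]
  have hdet2 : (Matrix.vandermonde q).det * Cm.det
      = ∏ j, ∏ m ∈ Finset.univ.erase j, (q j - q m) := by
    rw [← Matrix.det_mul, h2, Matrix.det_diagonal]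
  -- nonvanishing facts
  have he : (∏ i, ∏ m, (p i - q m)) ≠ 0 :=
    Finset.prod_ne_zero_iff.2 fun i _ =>
      Finset.prod_ne_zero_iff.2 fun m _ => sub_ne_zero.2 (hpq i m)
  have hW : (Matrix.vandermonde q).det ≠ 0 :=
    Matrix.det_vandermonde_ne_zero_iff.2 hq
  -- the combinatorial identity for the off-diagonal product
  have hoff : ∏ j, ∏ m ∈ Finset.univ.erase j, (q j - q m)
      = ∏ i, ∏ j ∈ Finset.Ioi i, ((q i - q j) * (q j - q i)) := by
    have hc : ∀ j : Fin n, Finset.univ.erase j = ({j}ᶜ : Finset (Fin n)) := by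
      intro j; ext m; simp [eq_comm]
    simp_rw [hc]
    convert (Finset.prod_prod_Ioi_mul_eq_prod_prod_off_diag (fun a b => q b - q a)).symm using 3
  -- identify the filter with Ioi
  have hfil : ∀ i : Fin n, Finset.univ.filter (fun j => i < j) = Finset.Ioi i := by
    intro i; ext j; simp
  -- final algebra
  rw [eq_div_iff he]
  -- reduce to : detV * detC = numerator
  have hkey : (Matrix.vandermonde p).det
        * (∏ j, ∏ m ∈ Finset.univ.erase j, (q j - q m))
      = (∏ i, ∏ j ∈ Finset.univ.filter (fun j => i < j), (p i - p j) * (q j - q i))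
        * (Matrix.vandermonde q).det := by
    rw [hoff, Matrix.det_vandermonde, Matrix.det_vandermonde]
    simp only [hfil]
    rw [← Finset.prod_mul_distrib, ← Finset.prod_mul_distrib]
    refine Finset.prod_congr rfl fun i _ => ?_
    rw [← Finset.prod_mul_distrib, ← Finset.prod_mul_distrib]
    refine Finset.prod_congr rfl fun j _ => ?_
    ring
  -- combine everything
  have := congrArg (fun x => (Matrix.vandermonde p).det * x) hdet2
  simp only [hkey] at this
  -- this : detVp * (detVq * detC) = N * detVq
  have h3 : (Matrix.vandermonde q).det * ((Matrix.vandermonde p).det * Cm.det)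
      = (Matrix.vandermonde q).det
        * ((∏ i, ∏ j ∈ Finset.univ.filter (fun j => i < j),
            (p i - p j) * (q j - q i))) := by
    rw [show (Matrix.vandermonde q).det * ((Matrix.vandermonde p).det * Cm.det)
        = (Matrix.vandermonde p).det * ((Matrix.vandermonde q).det * Cm.det) by ring,
      hdet2, hkey]
    ring
  have h4 : (Matrix.vandermonde p).det * Cm.det
      = ∏ i, ∏ j ∈ Finset.univ.filter (fun j => i < j), (p i - p j) * (q j - q i) :=
    mul_left_cancel₀ hW h3
  rw [mul_comm, ← hdet1]
  exact h4
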